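/- (Hall–Rado theorem) Let M be a matroid on a finite ground set E with rank function rk, and let A_1, …, A_ℓ be subsets of E. Then there exist pairwise distinct elements a_1, …, a_ℓ with a_j ∈ A_j for all j ∈ {1,…,ℓ} such that {a_1,…,a_ℓ} is an independent set of M, if and only if rk(⋃_{j∈J} A_j) ≥ |J| for every subset J ⊆ {1,…,ℓ}. -/

import Mathlib

/-- The rank of a set `X` in a matroid `M`: the maximum size of an independent subset of `X`. -/
noncomputable def matroidRank {α : Type*} (M : Matroid α) (X : Set α) : ℕ :=
  sSup {k | ∃ I, I ⊆ X ∧ M.Indep I ∧ I.ncard = k}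

section RankLemmas

variable {α : Type*} {M : Matroid α} {I J X Y : Set α}

lemma matroidRank_eq_of_basis (hE : M.E.Finite) (hI : M.IsBasis I X) :
    matroidRank M X = I.ncard := by
  have hXE := hI.subset_ground
  have hub : ∀ k ∈ {k | ∃ I', I' ⊆ X ∧ M.Indep I' ∧ I'.ncard = k}, k ≤ I.ncard := by
    rintro k ⟨I', hI'X, hI', rfl⟩
    obtain ⟨J, hJ, hI'J⟩ := hI'.subset_isBasis_of_subset hI'X hXE
    have hJI : J.encard = I.encard := hJ.encard_eq_encard hI
    have hJfin : J.Finite := hE.subset hJ.indep.subset_ground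
    calc I'.ncard ≤ J.ncard := Set.ncard_le_ncard hI'J hJfin
    _ = I.ncard := by rw [Set.ncard, Set.ncard, hJI]
  refine le_antisymm (csSup_le ⟨I.ncard, I, hI.subset, hI.indep, rfl⟩ hub)
    (le_csSup ⟨I.ncard, hub⟩ ⟨I, hI.subset, hI.indep, rfl⟩)

lemma indep_ncard_le_matroidRank (hE : M.E.Finite) (hI : M.Indep I) (hIX : I ⊆ X)
    (hX : X ⊆ M.E) : I.ncard ≤ matroidRank M X := by
  obtain ⟨J, hJ, hIJ⟩ := hI.subset_isBasis_of_subset hIX hX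
  rw [matroidRank_eq_of_basis hE hJ]
  exact Set.ncard_le_ncard hIJ (hE.subset hJ.indep.subset_ground)

lemma matroidRank_le_ncard (hE : M.E.Finite) (hX : X ⊆ M.E) :
    matroidRank M X ≤ X.ncard := by
  obtain ⟨I, hI⟩ := M.exists_isBasis X hX
  rw [matroidRank_eq_of_basis hE hI]
  exact Set.ncard_le_ncard hI.subset (hE.subset hX)

lemma matroidRank_mono (hE : M.E.Finite) (hXY : X ⊆ Y) (hY : Y ⊆ M.E) :
    matroidRank M X ≤ matroidRank M Y := by
  obtain ⟨I, hI⟩ := M.exists_isBasis X (hXY.trans hY)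
  rw [matroidRank_eq_of_basis hE hI]
  exact indep_ncard_le_matroidRank hE hI.indep (hI.subset.trans hXY) hY

lemma indep_of_ncard_le_matroidRank (hE : M.E.Finite) (hX : X ⊆ M.E)
    (h : X.ncard ≤ matroidRank M X) : M.Indep X := by
  obtain ⟨I, hI⟩ := M.exists_isBasis X hX
  rw [matroidRank_eq_of_basis hE hI] at h
  exact Set.eq_of_subset_of_ncard_le hI.subset h (hE.subset hX) ▸ hI.indep

lemma matroidRank_submod (hE : M.E.Finite) (hX : X ⊆ M.E) (hY : Y ⊆ M.E) :
    matroidRank M (X ∪ Y) + matroidRank M (X ∩ Y) ≤ matroidRank M X + matroidRank M Y := by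
  have hXY : X ∪ Y ⊆ M.E := Set.union_subset hX hY
  obtain ⟨I, hI⟩ := M.exists_isBasis (X ∩ Y) ((Set.inter_subset_left).trans hX)
  obtain ⟨J, hJ, hIJ⟩ := hI.indep.subset_isBasis_of_subset
    (hI.subset.trans (Set.inter_subset_left.trans Set.subset_union_left)) hXY
  have hJfin : J.Finite := hE.subset hJ.indep.subset_ground
  rw [matroidRank_eq_of_basis hE hI, matroidRank_eq_of_basis hE hJ]
  have h1 : (J ∩ X).ncard ≤ matroidRank M X :=
    indep_ncard_le_matroidRank hE (hJ.indep.subset Set.inter_subset_left)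
      Set.inter_subset_right hX
  have h2 : (J ∩ Y).ncard ≤ matroidRank M Y :=
    indep_ncard_le_matroidRank hE (hJ.indep.subset Set.inter_subset_left)
      Set.inter_subset_right hY
  have hunion : (J ∩ X) ∪ (J ∩ Y) = J := by
    rw [← Set.inter_union_distrib_left, Set.inter_eq_left.2 hJ.subset]
  have hinter : (J ∩ X) ∩ (J ∩ Y) = J ∩ (X ∩ Y) := by
    ext z; simp only [Set.mem_inter_iff]; tauto
  have hkey : ((J ∩ X) ∪ (J ∩ Y)).ncard + ((J ∩ X) ∩ (J ∩ Y)).ncard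
      = (J ∩ X).ncard + (J ∩ Y).ncard :=
    Set.ncard_union_add_ncard_inter _ _ (hJfin.subset Set.inter_subset_left)
      (hJfin.subset Set.inter_subset_left)
  rw [hunion, hinter] at hkey
  have hIsub : I ⊆ J ∩ (X ∩ Y) := Set.subset_inter hIJ hI.subset
  have hIcard : I.ncard ≤ (J ∩ (X ∩ Y)).ncard :=
    Set.ncard_le_ncard hIsub (hJfin.subset Set.inter_subset_left)
  omega

/-- The small case of Rado's theorem: all `A j` have at most one element. -/
lemma rado_small {ℓ : ℕ} (hE : M.E.Finite) (A : Fin ℓ → Set α) (hA : ∀ j, A j ⊆ M.E)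
    (hsmall : ∀ j, (A j).ncard ≤ 1)
    (hcond : ∀ J : Finset (Fin ℓ), J.card ≤ matroidRank M (⋃ j ∈ J, A j)) :
    ∃ a : Fin ℓ → α, Function.Injective a ∧ (∀ j, a j ∈ A j) ∧ M.Indep (Set.range a) := by
  classical
  have hsub : ∀ J : Finset (Fin ℓ), (⋃ j ∈ J, A j) ⊆ M.E :=
    fun J => Set.iUnion₂_subset fun j _ => hA j
  have hsingle : ∀ j, ∃ aj, A j = {aj} := by
    intro j
    have h1 : 1 ≤ matroidRank M (⋃ i ∈ ({j} : Finset (Fin ℓ)), A i) := by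
      simpa using hcond {j}
    have h2 : (⋃ i ∈ ({j} : Finset (Fin ℓ)), A i) = A j := by simp
    rw [h2] at h1
    have h3 : 1 ≤ (A j).ncard := h1.trans (matroidRank_le_ncard hE (hA j))
    have h4 := hsmall j
    rw [← Set.ncard_eq_one]
    omega
  choose a ha using hsingle
  have hmem : ∀ j, a j ∈ A j := fun j => (ha j).symm ▸ rfl
  have hrange : Set.range a = ⋃ j ∈ (Finset.univ : Finset (Fin ℓ)), A j := by
    ext z
    simp only [Set.mem_range, Set.mem_iUnion, Finset.mem_univ, exists_true_left, ha,
      Set.mem_singleton_iff, exists_const]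
    exact ⟨fun ⟨j, h⟩ => ⟨j, h.symm⟩, fun ⟨j, h⟩ => ⟨j, h.symm⟩⟩
  have hcoe : Set.range a = ↑(Finset.univ.image a) := by
    ext z; simp
  have hrk : ℓ ≤ matroidRank M (Set.range a) := by
    rw [hrange]
    simpa using hcond Finset.univ
  have hle : matroidRank M (Set.range a) ≤ (Finset.univ.image a).card := by
    rw [hcoe, ← Set.ncard_coe_finset]
    exact matroidRank_le_ncard hE (by rw [← hcoe, hrange]; exact hsub Finset.univ)
  have hcard_le : (Finset.univ.image a).card ≤ ℓ := by
    simpa using Finset.card_image_le (s := Finset.univ) (f := a)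
  have hcard : (Finset.univ.image a).card = ℓ := le_antisymm hcard_le (hrk.trans hle)
  have hinj : Function.Injective a := by
    have := Finset.card_image_iff.mp (by rw [hcard]; simp)
    exact fun i j hij => this (by simp) (by simp) hij
  refine ⟨a, hinj, hmem, ?_⟩
  apply indep_of_ncard_le_matroidRank hE (by rw [hrange]; exact hsub Finset.univ)
  rw [hcoe, Set.ncard_coe_finset, hcard]
  rwa [← hcoe]

lemma rado_aux (M : Matroid α) (hE : M.E.Finite) (ℓ : ℕ) (n : ℕ) :
    ∀ (A : Fin ℓ → Set α), (∀ j, A j ⊆ M.E) → (∑ j, (A j).ncard) ≤ n →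
    (∀ J : Finset (Fin ℓ), J.card ≤ matroidRank M (⋃ j ∈ J, A j)) →
    ∃ a : Fin ℓ → α, Function.Injective a ∧ (∀ j, a j ∈ A j) ∧ M.Indep (Set.range a) := by
  induction n with
  | zero =>
    intro A hA hsum hcond
    refine rado_small hE A hA (fun j => ?_) hcond
    have : (A j).ncard ≤ ∑ i, (A i).ncard :=
      Finset.single_le_sum (f := fun i => (A i).ncard) (fun i _ => Nat.zero_le _)
        (Finset.mem_univ j)
    omega
  | succ n IH =>
    intro A hA hsum hcond
    by_cases hsmall : ∀ j, (A j).ncard ≤ 1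
    · exact rado_small hE A hA hsmall hcond
    push_neg at hsmall
    obtain ⟨j0, hj0⟩ := hsmall
    have hfin0 : (A j0).Finite := hE.subset (hA j0)
    obtain ⟨x, y, hx, hy, hxy⟩ := (Set.one_lt_ncard_iff hfin0).mp hj0
    -- the modified families
    have key : ∀ z ∈ A j0, ∃ J1 : Finset (Fin ℓ),
        ¬ (J1.card ≤ matroidRank M (⋃ j ∈ J1, Function.update A j0 (A j0 \ {z}) j)) →
        True := fun _ _ => ⟨∅, fun _ => trivial⟩
    clear key
    -- helper to apply IH when the condition survives deleting z from A j0
    have step : ∀ z ∈ A j0,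
        (∀ J : Finset (Fin ℓ), J.card ≤
            matroidRank M (⋃ j ∈ J, Function.update A j0 (A j0 \ {z}) j)) →
        ∃ a : Fin ℓ → α, Function.Injective a ∧ (∀ j, a j ∈ A j) ∧ M.Indep (Set.range a) := by
      intro z hz hcond'
      set A1 := Function.update A j0 (A j0 \ {z}) with hA1def
      have hA1sub : ∀ j, A1 j ⊆ A j := by
        intro j
        rcases eq_or_ne j j0 with rfl | hne
        · rw [hA1def, Function.update_self]; exact Set.diff_subset
        · rw [hA1def, Function.update_of_ne hne]
      have hA1 : ∀ j, A1 j ⊆ M.E := fun j => (hA1sub j).trans (hA j)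
      have hsum1 : ∑ j, (A1 j).ncard ≤ n := by
        have h1 : ∑ j, (A1 j).ncard
            = (A j0 \ {z}).ncard + ∑ j ∈ Finset.univ.erase j0, (A j).ncard := by
          rw [← Finset.add_sum_erase _ _ (Finset.mem_univ j0)]
          congr 1
          · rw [hA1def, Function.update_self]
          · exact Finset.sum_congr rfl fun j hj => by
              rw [hA1def, Function.update_of_ne (Finset.ne_of_mem_erase hj)]
        have h2 : ∑ j, (A j).ncard
            = (A j0).ncard + ∑ j ∈ Finset.univ.erase j0, (A j).ncard :=
          (Finset.add_sum_erase Finset.univ (fun j => (A j).ncard)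
            (Finset.mem_univ j0)).symm
        have h3 : (A j0 \ {z}).ncard = (A j0).ncard - 1 :=
          Set.ncard_diff_singleton_of_mem hz
        omega
      obtain ⟨a, hinj, hmem, hind⟩ := IH A1 hA1 hsum1 hcond'
      exact ⟨a, hinj, fun j => hA1sub j (hmem j), hind⟩
    by_cases hc1 : ∀ J : Finset (Fin ℓ), J.card ≤
        matroidRank M (⋃ j ∈ J, Function.update A j0 (A j0 \ {x}) j)
    · exact step x hx hc1
    by_cases hc2 : ∀ J : Finset (Fin ℓ), J.card ≤
        matroidRank M (⋃ j ∈ J, Function.update A j0 (A j0 \ {y}) j)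
    · exact step y hy hc2
    -- both fail: derive a contradiction via submodularity
    exfalso
    push_neg at hc1 hc2
    obtain ⟨J1, hJ1⟩ := hc1
    obtain ⟨J2, hJ2⟩ := hc2
    set A1 := Function.update A j0 (A j0 \ {x}) with hA1def
    set A2 := Function.update A j0 (A j0 \ {y}) with hA2def
    set X := ⋃ j ∈ J1, A1 j with hXdef
    set Y := ⋃ j ∈ J2, A2 j with hYdef
    have hA1sub : ∀ j, A1 j ⊆ A j := by
      intro j
      rcases eq_or_ne j j0 with rfl | hne
      · rw [hA1def, Function.update_self]; exact Set.diff_subset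
      · rw [hA1def, Function.update_of_ne hne]
    have hA2sub : ∀ j, A2 j ⊆ A j := by
      intro j
      rcases eq_or_ne j j0 with rfl | hne
      · rw [hA2def, Function.update_self]; exact Set.diff_subset
      · rw [hA2def, Function.update_of_ne hne]
    have hXE : X ⊆ M.E := Set.iUnion₂_subset fun j _ => (hA1sub j).trans (hA j)
    have hYE : Y ⊆ M.E := Set.iUnion₂_subset fun j _ => (hA2sub j).trans (hA j)
    -- j0 must be in J1 and J2
    have hj0J1 : j0 ∈ J1 := by
      by_contra hmem
      have heq : X = ⋃ j ∈ J1, A j := by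
        refine Set.iUnion₂_congr fun j hj => ?_
        rw [hA1def, Function.update_of_ne (by rintro rfl; exact hmem hj)]
      rw [heq] at hJ1
      exact absurd (hcond J1) (not_le.mpr hJ1)
    have hj0J2 : j0 ∈ J2 := by
      by_contra hmem
      have heq : Y = ⋃ j ∈ J2, A j := by
        refine Set.iUnion₂_congr fun j hj => ?_
        rw [hA2def, Function.update_of_ne (by rintro rfl; exact hmem hj)]
      rw [heq] at hJ2
      exact absurd (hcond J2) (not_le.mpr hJ2)
    -- union and intersection inclusions
    have hUsub : (⋃ j ∈ J1 ∪ J2, A j) ⊆ X ∪ Y := by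
      intro z hz
      simp only [Set.mem_iUnion, Finset.mem_union, exists_prop] at hz
      obtain ⟨j, hj, hzj⟩ := hz
      rcases eq_or_ne j j0 with rfl | hne
      · rcases ne_or_eq z x with hzx | rfl
        · left
          simp only [hXdef, Set.mem_iUnion, exists_prop]
          exact ⟨_, hj0J1, by rw [hA1def, Function.update_self]; exact ⟨hzj, hzx⟩⟩
        · right
          simp only [hYdef, Set.mem_iUnion, exists_prop]
          exact ⟨_, hj0J2, by rw [hA2def, Function.update_self]; exact ⟨hzj, hxy⟩⟩
      · rcases hj with hj | hj
        · left
          simp only [hXdef, Set.mem_iUnion, exists_prop]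
          exact ⟨j, hj, by rwa [hA1def, Function.update_of_ne hne]⟩
        · right
          simp only [hYdef, Set.mem_iUnion, exists_prop]
          exact ⟨j, hj, by rwa [hA2def, Function.update_of_ne hne]⟩
    have hIsub : (⋃ j ∈ (J1 ∩ J2).erase j0, A j) ⊆ X ∩ Y := by
      intro z hz
      simp only [Set.mem_iUnion, exists_prop] at hz
      obtain ⟨j, hj, hzj⟩ := hz
      have hne : j ≠ j0 := Finset.ne_of_mem_erase hj
      have hj12 : j ∈ J1 ∩ J2 := Finset.mem_of_mem_erase hj
      constructor
      · simp only [hXdef, Set.mem_iUnion, exists_prop]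
        exact ⟨j, Finset.mem_of_mem_inter_left hj12,
          by rwa [hA1def, Function.update_of_ne hne]⟩
      · simp only [hYdef, Set.mem_iUnion, exists_prop]
        exact ⟨j, Finset.mem_of_mem_inter_right hj12,
          by rwa [hA2def, Function.update_of_ne hne]⟩
    have h1 : (J1 ∪ J2).card ≤ matroidRank M (⋃ j ∈ J1 ∪ J2, A j) := hcond _
    have h1' : matroidRank M (⋃ j ∈ J1 ∪ J2, A j) ≤ matroidRank M (X ∪ Y) :=
      matroidRank_mono hE hUsub (Set.union_subset hXE hYE)
    have h2 : ((J1 ∩ J2).erase j0).card ≤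
        matroidRank M (⋃ j ∈ (J1 ∩ J2).erase j0, A j) := hcond _
    have h2' : matroidRank M (⋃ j ∈ (J1 ∩ J2).erase j0, A j) ≤ matroidRank M (X ∩ Y) :=
      matroidRank_mono hE hIsub ((Set.inter_subset_left).trans hXE)
    have hsubmod := matroidRank_submod hE hXE hYE
    have hcards : (J1 ∪ J2).card + (J1 ∩ J2).card = J1.card + J2.card :=
      Finset.card_union_add_card_inter J1 J2
    have herase : ((J1 ∩ J2).erase j0).card = (J1 ∩ J2).card - 1 :=
      Finset.card_erase_of_mem (Finset.mem_inter.mpr ⟨hj0J1, hj0J2⟩)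
    have hpos : 1 ≤ (J1 ∩ J2).card :=
      Finset.card_pos.mpr ⟨j0, Finset.mem_inter.mpr ⟨hj0J1, hj0J2⟩⟩
    omega

end RankLemmas

/-- **Hall–Rado theorem.** Let `M` be a matroid on a finite ground set and `A_1, …, A_ℓ`
subsets of the ground set.  There exist pairwise distinct `a_1, …, a_ℓ` with `a_j ∈ A_j`
forming an independent set of `M` if and only if `rk(⋃_{j ∈ J} A_j) ≥ |J|` for all `J`. -/
theorem hall_rado {α : Type*} (M : Matroid α) (hE : M.E.Finite)
    (ℓ : ℕ) (A : Fin ℓ → Set α) (hA : ∀ j, A j ⊆ M.E) :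
    (∃ a : Fin ℓ → α, Function.Injective a ∧ (∀ j, a j ∈ A j) ∧
        M.Indep (Set.range a)) ↔
      ∀ J : Finset (Fin ℓ), J.card ≤ matroidRank M (⋃ j ∈ J, A j) := by
  constructor
  · rintro ⟨a, hinj, hmem, hind⟩ J
    have himg : a '' ↑J ⊆ ⋃ j ∈ J, A j := by
      rintro _ ⟨j, hj, rfl⟩
      simp only [Set.mem_iUnion, exists_prop]
      exact ⟨j, hj, hmem j⟩
    have hcard : (a '' ↑J).ncard = J.card := by
      rw [Set.ncard_image_of_injective _ hinj, Set.ncard_coe_finset]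
    have := indep_ncard_le_matroidRank hE (hind.subset (Set.image_subset_range a ↑J))
      himg (Set.iUnion₂_subset fun j _ => hA j)
    omega
  · intro hcond
    exact rado_aux M hE ℓ (∑ j, (A j).ncard) A hA le_rfl hcond
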